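/- Let 1 ≤ q < ∞. Let X be a real Banach space with an unconditional basis (e_n)_{n∈ℕ} satisfying a lower q-estimate and let Y be a real Banach space with an unconditional basis (y_n)_{n∈ℕ} satisfying an upper q-estimate. Then every strictly singular bounded linear operator T : Y → X is compact. -/

import Mathlib

set_option linter.unusedSectionVars false


open scoped BigOperators

/-- `e` is a Schauder basis of `X`: every vector has a unique expansion as a norm-convergent
series `∑ n, a n • e n` (partial sums over `Finset.range N`). -/
def IsSchauderBasis {X : Type*} [NormedAddCommGroup X] [NormedSpace ℝ X] (e : ℕ → X) : Prop :=
  ∀ x : X, ∃! a : ℕ → ℝ,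
    Filter.Tendsto (fun N => ∑ n ∈ Finset.range N, a n • e n) Filter.atTop (nhds x)

/-- `u` is a block basic sequence with respect to `e`. -/
def IsBlockBasic {X : Type*} [NormedAddCommGroup X] [NormedSpace ℝ X]
    (e : ℕ → X) (u : ℕ → X) : Prop :=
  ∃ (A : ℕ → Finset ℕ) (a : ℕ → ℝ),
    (∀ j, (A j).Nonempty) ∧
    (∀ j, ∀ m ∈ A j, ∀ k ∈ A (j + 1), m < k) ∧
    (∀ j, u j = ∑ n ∈ A j, a n • e n)

/-- A sequence is semi-normalized if its norms are bounded away from zero and from infinity. -/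
def SemiNormalized {X : Type*} [NormedAddCommGroup X] (u : ℕ → X) : Prop :=
  ∃ c C : ℝ, 0 < c ∧ ∀ j, c ≤ ‖u j‖ ∧ ‖u j‖ ≤ C

/-- Two sequences (possibly in different spaces) are equivalent. -/
def SeqEquiv {X Y : Type*} [NormedAddCommGroup X] [NormedSpace ℝ X]
    [NormedAddCommGroup Y] [NormedSpace ℝ Y] (u : ℕ → X) (w : ℕ → Y) : Prop :=
  ∃ C : ℝ, 1 ≤ C ∧ ∀ (a : ℕ → ℝ) (s : Finset ℕ),
    C⁻¹ * ‖∑ j ∈ s, a j • w j‖ ≤ ‖∑ j ∈ s, a j • u j‖ ∧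
    ‖∑ j ∈ s, a j • u j‖ ≤ C * ‖∑ j ∈ s, a j • w j‖

/-- A bounded linear operator is compact if the image of the closed unit ball is
relatively compact. -/
def CompactOp {X Y : Type*} [NormedAddCommGroup X] [NormedSpace ℝ X]
    [NormedAddCommGroup Y] [NormedSpace ℝ Y] (T : Y →L[ℝ] X) : Prop :=
  IsCompact (closure (T '' Metric.closedBall 0 1))

/-- `e` is an unconditional basis of `X`. -/
def IsUncondBasis {X : Type*} [NormedAddCommGroup X] [NormedSpace ℝ X] (e : ℕ → X) : Prop :=
  (∀ n, e n ≠ 0) ∧ ∀ x : X, ∃! a : ℕ → ℝ, HasSum (fun n => a n • e n) x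

/-- `u` is disjointly finitely supported with respect to `e`. -/
def DisjSupported {X : Type*} [NormedAddCommGroup X] [NormedSpace ℝ X]
    (e : ℕ → X) (u : ℕ → X) : Prop :=
  ∃ A : ℕ → Finset ℕ, Pairwise (Function.onFun Disjoint A) ∧
    ∀ j, u j ∈ Submodule.span ℝ (e '' (A j : Set ℕ))

/-- The basis `e` satisfies a lower `q`-estimate. -/
def LowerEstimate {X : Type*} [NormedAddCommGroup X] [NormedSpace ℝ X]
    (e : ℕ → X) (q : ℝ) : Prop :=
  ∃ C : ℝ, 0 < C ∧ ∀ (m : ℕ) (f : Fin m → X) (A : Fin m → Finset ℕ),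
    Pairwise (Function.onFun Disjoint A) →
    (∀ i, f i ∈ Submodule.span ℝ (e '' (A i : Set ℕ))) →
    (∑ i, ‖f i‖ ^ q) ^ (1 / q) ≤ C * ‖∑ i, f i‖

/-- The basis `e` satisfies an upper `q`-estimate. -/
def UpperEstimate {X : Type*} [NormedAddCommGroup X] [NormedSpace ℝ X]
    (e : ℕ → X) (q : ℝ) : Prop :=
  ∃ C : ℝ, 0 < C ∧ ∀ (m : ℕ) (f : Fin m → X) (A : Fin m → Finset ℕ),
    Pairwise (Function.onFun Disjoint A) →
    (∀ i, f i ∈ Submodule.span ℝ (e '' (A i : Set ℕ))) →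
    ‖∑ i, f i‖ ≤ C * (∑ i, ‖f i‖ ^ q) ^ (1 / q)

/-- `u` is equivalent to the canonical basis of `ℓ_q`. -/
def EquivCanonLq {X : Type*} [NormedAddCommGroup X] [NormedSpace ℝ X]
    (u : ℕ → X) (q : ℝ) : Prop :=
  ∃ C : ℝ, 1 ≤ C ∧ ∀ (a : ℕ → ℝ) (s : Finset ℕ),
    C⁻¹ * (∑ j ∈ s, |a j| ^ q) ^ (1 / q) ≤ ‖∑ j ∈ s, a j • u j‖ ∧
    ‖∑ j ∈ s, a j • u j‖ ≤ C * (∑ j ∈ s, |a j| ^ q) ^ (1 / q)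

/-- `Z` contains an isomorphic copy of `ℓ_q`: there is a bounded linear map `J : ℓ_q → Z`
which is bounded below. -/
def ContainsLp (Z : Type*) [NormedAddCommGroup Z] [NormedSpace ℝ Z] (q : ℝ) : Prop :=
  ∃ (J : lp (fun _ : ℕ => ℝ) (ENNReal.ofReal q) →ₗ[ℝ] Z) (C c : ℝ), 0 < c ∧
    ∀ f, ‖J f‖ ≤ C * ‖f‖ ∧ c * ‖f‖ ≤ ‖J f‖

/-- `T` is strictly singular: it is bounded below on no infinite-dimensional subspace. -/
def StrictlySingular {X Y : Type*} [NormedAddCommGroup X] [NormedSpace ℝ X]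
    [NormedAddCommGroup Y] [NormedSpace ℝ Y] (T : Y →L[ℝ] X) : Prop :=
  ∀ (Z : Submodule ℝ Y) (c : ℝ), 0 < c → (∀ z ∈ Z, c * ‖z‖ ≤ ‖T z‖) →
    FiniteDimensional ℝ Z

/-- A finite family of Banach spaces is splitting for unconditional bases. -/
def SplittingFamily {ι : Type*} [Fintype ι] (Z : ι → Type*)
    [∀ i, NormedAddCommGroup (Z i)] [∀ i, NormedSpace ℝ (Z i)] : Prop :=
  ∀ w : ℕ → (∀ i, Z i), IsUncondBasis w →
    ∃ N : ι → Set ℕ, Pairwise (Function.onFun Disjoint N) ∧ (⋃ i, N i) = Set.univ ∧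
      ∀ i, Nonempty ((Submodule.span ℝ (w '' N i)).topologicalClosure ≃L[ℝ] Z i)

/-- A pair of Banach spaces is splitting for unconditional bases. -/
def SplittingPair (U V : Type*) [NormedAddCommGroup U] [NormedSpace ℝ U]
    [NormedAddCommGroup V] [NormedSpace ℝ V] : Prop :=
  ∀ w : ℕ → U × V, IsUncondBasis w →
    ∃ N₁ N₂ : Set ℕ, Disjoint N₁ N₂ ∧ N₁ ∪ N₂ = Set.univ ∧
      Nonempty ((Submodule.span ℝ (w '' N₁)).topologicalClosure ≃L[ℝ] U) ∧
      Nonempty ((Submodule.span ℝ (w '' N₂)).topologicalClosure ≃L[ℝ] V)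

/-- `U` has a unique, up to equivalence and permutation, unconditional basis. -/
def HasUTAPBasis (U : Type*) [NormedAddCommGroup U] [NormedSpace ℝ U] : Prop :=
  ∃ e : ℕ → U, IsUncondBasis e ∧ SemiNormalized e ∧
    ∀ f : ℕ → U, IsUncondBasis f → SemiNormalized f →
      ∃ π : Equiv.Perm ℕ, SeqEquiv (fun n => f (π n)) e

/-- `y` is a subsymmetric basic sequence: semi-normalized, an unconditional basis of its
closed linear span, and equivalent to all of its subsequences. -/
def IsSubsymmetric {X : Type*} [NormedAddCommGroup X] [NormedSpace ℝ X] (y : ℕ → X) : Prop :=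
  SemiNormalized y ∧ (∀ n, y n ≠ 0) ∧
  (∀ x : X, x ∈ (Submodule.span ℝ (Set.range y)).topologicalClosure →
    ∃! a : ℕ → ℝ, HasSum (fun n => a n • y n) x) ∧
  ∀ k : ℕ → ℕ, StrictMono k → SeqEquiv (fun n => y (k n)) y



section AuxDev

open Filter Finset Topology

section A
variable {V : Type*} [NormedAddCommGroup V] [NormedSpace ℝ V]

def IsUncondBasis' (e : ℕ → V) : Prop :=
  (∀ n, e n ≠ 0) ∧ ∀ x : V, ∃! a : ℕ → ℝ, HasSum (fun n => a n • e n) x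

variable {e : ℕ → V}

noncomputable def ucoef (he : IsUncondBasis' e) (x : V) : ℕ → ℝ :=
  (he.2 x).exists.choose

theorem ucoef_hasSum (he : IsUncondBasis' e) (x : V) :
    HasSum (fun n => ucoef he x n • e n) x := (he.2 x).exists.choose_spec

theorem ucoef_eq (he : IsUncondBasis' e) {x : V} {a : ℕ → ℝ}
    (ha : HasSum (fun n => a n • e n) x) : a = ucoef he x :=
  (he.2 x).unique ha (ucoef_hasSum he x)

theorem ucoef_sub (he : IsUncondBasis' e) (x₁ x₂ : V) :
    ucoef he (x₁ - x₂) = fun n => ucoef he x₁ n - ucoef he x₂ n := by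
  refine (ucoef_eq he ?_).symm
  simpa [sub_smul] using (ucoef_hasSum he x₁).sub (ucoef_hasSum he x₂)

end A

section B
variable {V : Type*} [NormedAddCommGroup V] [NormedSpace ℝ V]

def coefSub (e : ℕ → V) : Submodule ℝ (ℕ → ℝ) where
  carrier := {a | Summable fun n => a n • e n}
  zero_mem' := by simp [summable_zero]
  add_mem' := fun {a b} ha hb => by simpa [add_smul] using ha.add hb
  smul_mem' := fun c a ha => by simpa [smul_smul] using ha.const_smul c

theorem mem_coefSub {e : ℕ → V} {a : ℕ → ℝ} :
    a ∈ coefSub e ↔ Summable fun n => a n • e n := Iff.rfl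

variable [CompleteSpace V]

theorem bddAbove_psum {e : ℕ → V} {a : ℕ → ℝ} (ha : Summable fun n => a n • e n) :
    BddAbove (Set.range fun s : Finset ℕ => ‖∑ n ∈ s, a n • e n‖) := by
  obtain ⟨s₀, h₀⟩ := summable_iff_vanishing_norm.1 ha 1 one_pos
  refine ⟨(∑ n ∈ s₀, ‖a n • e n‖) + 1, ?_⟩
  rintro - ⟨s, rfl⟩
  have hsplit : ∑ n ∈ s ∩ s₀, a n • e n + ∑ n ∈ s \ s₀, a n • e n = ∑ n ∈ s, a n • e n :=
    Finset.sum_inter_add_sum_sdiff s s₀ _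
  calc ‖∑ n ∈ s, a n • e n‖ = ‖∑ n ∈ s ∩ s₀, a n • e n + ∑ n ∈ s \ s₀, a n • e n‖ := by
        rw [hsplit]
    _ ≤ ‖∑ n ∈ s ∩ s₀, a n • e n‖ + ‖∑ n ∈ s \ s₀, a n • e n‖ := norm_add_le _ _
    _ ≤ (∑ n ∈ s₀, ‖a n • e n‖) + 1 := by
        refine add_le_add ?_ (le_of_lt (h₀ _ Finset.sdiff_disjoint))
        refine le_trans (norm_sum_le _ _) ?_
        exact Finset.sum_le_sum_of_subset_of_nonneg Finset.inter_subset_right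
          (fun _ _ _ => norm_nonneg _)

noncomputable def ESp (e : ℕ → V) (_he : ∀ n, e n ≠ 0) : Type _ := ↥(coefSub e)

variable {e : ℕ → V} {he : ∀ n, e n ≠ 0}

noncomputable instance : AddCommGroup (ESp e he) := inferInstanceAs (AddCommGroup ↥(coefSub e))
noncomputable instance : Module ℝ (ESp e he) := inferInstanceAs (Module ℝ ↥(coefSub e))

@[simp] theorem ESp.coe_add (a b : ESp e he) (n : ℕ) : ((a + b : ESp e he)).1 n = a.1 n + b.1 n :=
  rfl
@[simp] theorem ESp.coe_sub (a b : ESp e he) (n : ℕ) : ((a - b : ESp e he)).1 n = a.1 n - b.1 n :=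
  rfl
@[simp] theorem ESp.coe_neg (a : ESp e he) (n : ℕ) : ((-a : ESp e he)).1 n = - a.1 n := rfl
@[simp] theorem ESp.coe_smul (c : ℝ) (a : ESp e he) (n : ℕ) :
    ((c • a : ESp e he)).1 n = c * a.1 n := rfl
@[simp] theorem ESp.coe_zero (n : ℕ) : ((0 : ESp e he)).1 n = 0 := rfl

theorem ESp.summ (a : ESp e he) : Summable fun n => a.1 n • e n := a.2

noncomputable instance : NormedAddCommGroup (ESp e he) :=
  AddGroupNorm.toNormedAddCommGroup
  { toFun := fun a => ⨆ s : Finset ℕ, ‖∑ n ∈ s, a.1 n • e n‖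
    map_zero' := by simp
    add_le' := fun a b => by
      refine ciSup_le fun s => ?_
      have : ∑ n ∈ s, (a + b).1 n • e n = ∑ n ∈ s, a.1 n • e n + ∑ n ∈ s, b.1 n • e n := by
        rw [← Finset.sum_add_distrib]
        exact Finset.sum_congr rfl fun n _ => by rw [ESp.coe_add, add_smul]
      rw [this]
      exact le_trans (norm_add_le _ _)
        (add_le_add (le_ciSup (bddAbove_psum a.2) s) (le_ciSup (bddAbove_psum b.2) s))
    neg' := fun a => by
      refine congrArg _ (funext fun s => ?_)
      rw [show ∑ n ∈ s, (-a).1 n • e n = -∑ n ∈ s, a.1 n • e n by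
        rw [← Finset.sum_neg_distrib]
        exact Finset.sum_congr rfl fun n _ => by rw [ESp.coe_neg, neg_smul], norm_neg]
    eq_zero_of_map_eq_zero' := fun a h => by
      have key : ∀ n, a.1 n = 0 := by
        intro n
        have h1 : ‖∑ m ∈ {n}, a.1 m • e m‖ ≤ 0 := h ▸ le_ciSup (bddAbove_psum a.2) {n}
        rw [Finset.sum_singleton] at h1
        have := le_antisymm h1 (norm_nonneg _)
        rcases smul_eq_zero.1 (norm_eq_zero.1 this) with h' | h'
        · exact h'
        · exact absurd h' (he n)
      exact Subtype.ext (funext key) }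

theorem ESp.norm_def (a : ESp e he) : ‖a‖ = ⨆ s : Finset ℕ, ‖∑ n ∈ s, a.1 n • e n‖ := rfl

theorem ESp.psum_le (a : ESp e he) (s : Finset ℕ) : ‖∑ n ∈ s, a.1 n • e n‖ ≤ ‖a‖ :=
  le_ciSup (bddAbove_psum a.2) s

noncomputable instance : NormedSpace ℝ (ESp e he) where
  norm_smul_le c a := by
    refine ciSup_le fun s => ?_
    have : ∑ n ∈ s, (c • a).1 n • e n = c • ∑ n ∈ s, a.1 n • e n := by
      rw [Finset.smul_sum]
      exact Finset.sum_congr rfl fun n _ => by rw [ESp.coe_smul, smul_smul]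
    rw [this, norm_smul]
    exact mul_le_mul_of_nonneg_left (ESp.psum_le a s) (norm_nonneg c)

theorem ESp.coord_cauchy (A : ℕ → ESp e he) (hA : CauchySeq A) (n : ℕ) :
    CauchySeq fun k => (A k).1 n := by
  have hen : (0:ℝ) < ‖e n‖ := norm_pos_iff.2 (he n)
  rw [Metric.cauchySeq_iff] at hA ⊢
  intro ε hε
  obtain ⟨N, hN⟩ := hA (ε * ‖e n‖) (mul_pos hε hen)
  refine ⟨N, fun k hk l hl => ?_⟩
  have h1 : ‖∑ m ∈ {n}, (A k - A l).1 m • e m‖ ≤ ‖A k - A l‖ := ESp.psum_le _ _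
  rw [Finset.sum_singleton, ESp.coe_sub, norm_smul] at h1
  have h2 : ‖A k - A l‖ < ε * ‖e n‖ := by
    have := hN k hk l hl
    rwa [dist_eq_norm] at this
  have : ‖(A k).1 n - (A l).1 n‖ * ‖e n‖ < ε * ‖e n‖ := lt_of_le_of_lt h1 h2
  have := lt_of_mul_lt_mul_right this (le_of_lt hen)
  rwa [dist_eq_norm]

noncomputable instance : CompleteSpace (ESp e he) := by
  refine Metric.complete_of_cauchySeq_tendsto fun A hA => ?_
  -- coordinatewise limits
  have hcc : ∀ n, ∃ t : ℝ, Tendsto (fun k => (A k).1 n) atTop (𝓝 t) := fun n =>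
    cauchySeq_tendsto_of_complete (ESp.coord_cauchy A hA n)
  choose a ha using hcc
  -- key uniform estimate
  have key : ∀ ε > (0:ℝ), ∃ N, ∀ k ≥ N, ∀ s : Finset ℕ,
      ‖∑ n ∈ s, ((A k).1 n - a n) • e n‖ ≤ ε := by
    intro ε hε
    obtain ⟨N, hN⟩ := Metric.cauchySeq_iff.1 hA ε hε
    refine ⟨N, fun k hk s => ?_⟩
    have hlim : Tendsto (fun l => ∑ n ∈ s, ((A k).1 n - (A l).1 n) • e n) atTop
        (𝓝 (∑ n ∈ s, ((A k).1 n - a n) • e n)) := by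
      refine tendsto_finset_sum _ fun n _ => ?_
      exact ((tendsto_const_nhds.sub (ha n)).smul_const (e n))
    refine le_of_tendsto (hlim.norm) ?_
    filter_upwards [eventually_ge_atTop N] with l hl
    have h1 : ‖∑ n ∈ s, (A k - A l).1 n • e n‖ ≤ ‖A k - A l‖ := ESp.psum_le _ _
    have h2 : ‖A k - A l‖ < ε := by
      have := hN k hk l hl; rwa [dist_eq_norm] at this
    refine le_of_lt (lt_of_le_of_lt ?_ h2)
    simpa using h1
  -- the limit is summable
  have hsumm : Summable fun n => a n • e n := by
    rw [summable_iff_vanishing_norm]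
    intro ε hε
    obtain ⟨N, hN⟩ := key (ε/3) (by linarith)
    obtain ⟨s₀, hs₀⟩ := summable_iff_vanishing_norm.1 (A N).2 (ε/3) (by linarith)
    refine ⟨s₀, fun t ht => ?_⟩
    have h1 : ‖∑ n ∈ t, (a n - (A N).1 n) • e n‖ ≤ ε/3 := by
      have := hN N le_rfl t
      have heq : ∑ n ∈ t, (a n - (A N).1 n) • e n = -∑ n ∈ t, ((A N).1 n - a n) • e n := by
        rw [← Finset.sum_neg_distrib]
        exact Finset.sum_congr rfl fun n _ => by rw [← neg_smul, neg_sub]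
      rw [heq, norm_neg]; exact this
    have heq2 : ∑ n ∈ t, a n • e n
        = ∑ n ∈ t, (a n - (A N).1 n) • e n + ∑ n ∈ t, (A N).1 n • e n := by
      rw [← Finset.sum_add_distrib]
      exact Finset.sum_congr rfl fun n _ => by rw [← add_smul, sub_add_cancel]
    calc ‖∑ n ∈ t, a n • e n‖ ≤ ‖∑ n ∈ t, (a n - (A N).1 n) • e n‖ + ‖∑ n ∈ t, (A N).1 n • e n‖ := by
          rw [heq2]; exact norm_add_le _ _
      _ < ε/3 + ε/3 := by
          exact add_lt_add_of_le_of_lt h1 (hs₀ t ht)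
      _ < ε := by linarith
  refine ⟨⟨a, hsumm⟩, ?_⟩
  refine Metric.tendsto_atTop.2 ?_
  intro ε hε
  obtain ⟨N, hN⟩ := key (ε/2) (by linarith)
  refine ⟨N, fun k hk => ?_⟩
  have : ‖A k - ⟨a, hsumm⟩‖ ≤ ε/2 := by
    refine ciSup_le fun s => ?_
    have := hN k hk s
    exact this
  refine (dist_eq_norm _ _).trans_lt ?_
  exact lt_of_le_of_lt this (by linarith)

noncomputable def sumCLM (e : ℕ → V) (he : ∀ n, e n ≠ 0) [CompleteSpace V] :
    ESp e he →L[ℝ] V := by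
  refine LinearMap.mkContinuous
    { toFun := fun a => ∑' n, a.1 n • e n
      map_add' := fun a b => by
        have : ∀ n, (a + b).1 n • e n = a.1 n • e n + b.1 n • e n := fun n => by
          rw [ESp.coe_add, add_smul]
        rw [tsum_congr this, Summable.tsum_add a.2 b.2]
      map_smul' := fun c a => by
        have : ∀ n, (c • a).1 n • e n = c • (a.1 n • e n) := fun n => by
          rw [ESp.coe_smul, smul_smul]
        rw [tsum_congr this, Summable.tsum_const_smul c a.2]
        rfl } 1 (fun a => ?_)
  rw [one_mul]
  have h := a.2.hasSum
  refine le_of_tendsto h.norm ?_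
  exact Eventually.of_forall fun s => ESp.psum_le a s

theorem sumCLM_apply (a : ESp e he) : sumCLM e he a = ∑' n, a.1 n • e n := rfl

theorem sumCLM_hasSum (a : ESp e he) : HasSum (fun n => a.1 n • e n) (sumCLM e he a) :=
  a.2.hasSum

theorem uncond_bound {e : ℕ → V} (he : IsUncondBasis' e) :
    ∃ K : ℝ, 1 ≤ K ∧ ∀ (x : V) (s : Finset ℕ), ‖∑ n ∈ s, ucoef he x n • e n‖ ≤ K * ‖x‖ := by
  classical
  set S := sumCLM e he.1 with hS
  have hker : LinearMap.ker (S : ESp e he.1 →ₗ[ℝ] V) = ⊥ := by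
    rw [LinearMap.ker_eq_bot']
    intro a hab
    have ha : HasSum (fun n => a.1 n • e n) 0 := hab ▸ sumCLM_hasSum a
    have hb : HasSum (fun n => ((0 : ESp e he.1)).1 n • e n) 0 := by
      simpa using (hasSum_zero : HasSum (fun _ : ℕ => (0:V)) 0)
    exact Subtype.ext ((ucoef_eq he ha).trans (ucoef_eq he hb).symm)
  have hrange : LinearMap.range (S : ESp e he.1 →ₗ[ℝ] V) = ⊤ := by
    rw [LinearMap.range_eq_top]
    intro x
    have h := ucoef_hasSum he x
    refine ⟨⟨ucoef he x, h.summable⟩, ?_⟩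
    exact h.tsum_eq
  set J := ContinuousLinearEquiv.ofBijective S hker hrange with hJ
  set K := max ‖(J.symm : V →L[ℝ] ESp e he.1)‖ 1 with hK
  refine ⟨K, le_max_right _ _, fun x s => ?_⟩
  set aE := J.symm x with haE
  have hJa : S aE = x := J.apply_symm_apply x
  have hx : HasSum (fun n => aE.1 n • e n) x := hJa ▸ sumCLM_hasSum aE
  have hcoef : ucoef he x = aE.1 := (ucoef_eq he hx).symm
  rw [hcoef]
  calc ‖∑ n ∈ s, aE.1 n • e n‖ ≤ ‖aE‖ := ESp.psum_le aE s
    _ ≤ ‖(J.symm : V →L[ℝ] ESp e he.1)‖ * ‖x‖ :=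
        (J.symm : V →L[ℝ] ESp e he.1).le_opNorm x
    _ ≤ K * ‖x‖ := mul_le_mul_of_nonneg_right (le_max_left _ _) (norm_nonneg x)

theorem ucoef_tail {e : ℕ → V} (he : IsUncondBasis' e) (x : V) {ε : ℝ} (hε : 0 < ε) :
    ∃ s₀ : Finset ℕ, ∀ s : Finset ℕ, s₀ ⊆ s → ‖x - ∑ n ∈ s, ucoef he x n • e n‖ ≤ ε := by
  have h := ucoef_hasSum he x
  have h2 : ∀ᶠ s : Finset ℕ in atTop, ‖x - ∑ n ∈ s, ucoef he x n • e n‖ ≤ ε := by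
    have h4 : Tendsto (fun s : Finset ℕ => ∑ n ∈ s, ucoef he x n • e n) atTop (𝓝 x) := h
    have h5 := h4.eventually (Metric.closedBall_mem_nhds x hε)
    refine h5.mono fun s hs => ?_
    rwa [dist_comm, dist_eq_norm] at hs
  obtain ⟨s₀, hs₀⟩ := eventually_atTop.1 h2
  exact ⟨s₀, fun s hs => hs₀ s (Finset.le_iff_subset.2 hs)⟩

end B

section C

theorem exists_separated {X : Type*} [NormedAddCommGroup X] {s : Set X}
    (hs : ¬ TotallyBounded s) :
    ∃ ε > (0:ℝ), ∃ p : ℕ → X, (∀ k, p k ∈ s) ∧ ∀ k l, k < l → ε ≤ dist (p k) (p l) := by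
  rw [Metric.totallyBounded_iff] at hs
  push_neg at hs
  obtain ⟨ε, hε, hεs⟩ := hs
  have hpt : ∀ t : Finset X, ∃ p ∈ s, ∀ q ∈ t, ε ≤ dist p q := by
    intro t
    have := hεs ↑t t.finite_toSet
    rw [Set.not_subset] at this
    obtain ⟨p, hp, hp2⟩ := this
    refine ⟨p, hp, fun q hq => ?_⟩
    by_contra hlt
    push_neg at hlt
    exact hp2 (Set.mem_biUnion hq (Metric.mem_ball.2 hlt))
  classical
  let G : ℕ → Finset X × X := fun k => Nat.rec
    (⟨∅, (hpt ∅).choose⟩)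
    (fun _ ih => ⟨insert ih.2 ih.1, (hpt (insert ih.2 ih.1)).choose⟩) k
  have hGs : ∀ k, (G k).2 ∈ s ∧ ∀ q ∈ (G k).1, ε ≤ dist (G k).2 q := by
    intro k
    cases k with
    | zero => exact ⟨(hpt ∅).choose_spec.1, fun q hq => ((hpt ∅).choose_spec.2 q hq)⟩
    | succ k => exact ⟨(hpt _).choose_spec.1, fun q hq => ((hpt _).choose_spec.2 q hq)⟩
  have hGstep : ∀ k, (G (k+1)).1 = insert (G k).2 (G k).1 := fun k => rfl
  have hmem : ∀ k l, k < l → (G k).2 ∈ (G l).1 := by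
    intro k l hkl
    induction l with
    | zero => omega
    | succ l ih =>
      rw [hGstep l]
      rcases Nat.lt_succ_iff_lt_or_eq.1 hkl with h | h
      · exact Finset.mem_insert_of_mem (ih h)
      · subst h; exact Finset.mem_insert_self _ _
  refine ⟨ε, hε, fun k => (G k).2, fun k => (hGs k).1, fun k l hkl => ?_⟩
  rw [dist_comm]
  exact (hGs l).2 _ (hmem k l hkl)

theorem exists_pointwise_subseq (g : ℕ → (ℕ → ℝ) × (ℕ → ℝ)) (b1 b2 : ℕ → ℝ)
    (hb : ∀ k n, |(g k).1 n| ≤ b1 n ∧ |(g k).2 n| ≤ b2 n) :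
    ∃ (φ : ℕ → ℕ) (L : (ℕ → ℝ) × (ℕ → ℝ)), StrictMono φ ∧
      (∀ n, Tendsto (fun k => (g (φ k)).1 n) atTop (𝓝 (L.1 n))) ∧
      (∀ n, Tendsto (fun k => (g (φ k)).2 n) atTop (𝓝 (L.2 n))) := by
  set K : Set ((ℕ → ℝ) × (ℕ → ℝ)) :=
    (Set.univ.pi fun n => Set.Icc (-(b1 n)) (b1 n)) ×ˢ
    (Set.univ.pi fun n => Set.Icc (-(b2 n)) (b2 n)) with hK
  have hKc : IsCompact K :=
    (isCompact_univ_pi fun n => isCompact_Icc).prod (isCompact_univ_pi fun n => isCompact_Icc)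
  have hgK : ∀ k, g k ∈ K := by
    intro k
    constructor
    · intro n _; exact abs_le.1 (hb k n).1
    · intro n _; exact abs_le.1 (hb k n).2
  obtain ⟨L, _, φ, hφ, hconv⟩ := hKc.tendsto_subseq hgK
  refine ⟨φ, L, hφ, fun n => ?_, fun n => ?_⟩
  · exact (((continuous_apply n).comp continuous_fst).tendsto L).comp hconv
  · exact (((continuous_apply n).comp continuous_snd).tendsto L).comp hconv

end C

section D
variable {X Y : Type*} [NormedAddCommGroup X] [NormedSpace ℝ X] [CompleteSpace X]
  [NormedAddCommGroup Y] [NormedSpace ℝ Y] [CompleteSpace Y]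
  {e : ℕ → X} {yb : ℕ → Y}

theorem ghstep (he : IsUncondBasis' e) (hy : IsUncondBasis' yb) (T : Y →L[ℝ] X) (w : ℕ → Y)
    (hcY : ∀ n, Tendsto (fun j => ucoef hy (w j) n) atTop (𝓝 0))
    (hcX : ∀ n, Tendsto (fun j => ucoef he (T (w j)) n) atTop (𝓝 0))
    (M J : ℕ) {ε : ℝ} (hε : 0 < ε) :
    ∃ j N, J < j ∧ M ≤ N ∧
      ‖w j - ∑ n ∈ Finset.range N \ Finset.range M, ucoef hy (w j) n • yb n‖ ≤ ε ∧
      ‖T (w j) - ∑ n ∈ Finset.range N \ Finset.range M, ucoef he (T (w j)) n • e n‖ ≤ ε := by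
  have keyY : Tendsto (fun j => ∑ n ∈ Finset.range M, ‖ucoef hy (w j) n • yb n‖) atTop (𝓝 0) := by
    have h := tendsto_finset_sum (Finset.range M)
      (fun n (_ : n ∈ Finset.range M) => ((hcY n).smul_const (yb n)).norm)
    simpa using h
  have keyX : Tendsto (fun j => ∑ n ∈ Finset.range M, ‖ucoef he (T (w j)) n • e n‖) atTop
      (𝓝 0) := by
    have h := tendsto_finset_sum (Finset.range M)
      (fun n (_ : n ∈ Finset.range M) => ((hcX n).smul_const (e n)).norm)
    simpa using h
  have hev : ∀ᶠ j in atTop, (∑ n ∈ Finset.range M, ‖ucoef hy (w j) n • yb n‖ < ε/2)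
      ∧ (∑ n ∈ Finset.range M, ‖ucoef he (T (w j)) n • e n‖ < ε/2) ∧ J < j := by
    filter_upwards [keyY.eventually (eventually_lt_nhds (by linarith : (0:ℝ) < ε/2)),
      keyX.eventually (eventually_lt_nhds (by linarith : (0:ℝ) < ε/2)),
      eventually_gt_atTop J] with j h1 h2 h3
    exact ⟨h1, h2, h3⟩
  obtain ⟨j, hjY, hjX, hjJ⟩ := hev.exists
  obtain ⟨sY, hsY⟩ := ucoef_tail hy (w j) (by linarith : (0:ℝ) < ε/2)
  obtain ⟨sX, hsX⟩ := ucoef_tail he (T (w j)) (by linarith : (0:ℝ) < ε/2)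
  set N := max M (((sY ∪ sX).sup id) + 1) with hN
  have hMN : M ≤ N := le_max_left _ _
  have hsub : ∀ t : Finset ℕ, t ⊆ sY ∪ sX → t ⊆ Finset.range N := by
    intro t ht n hn
    rw [Finset.mem_range]
    have : n ≤ (sY ∪ sX).sup id := Finset.le_sup (f := id) (ht hn)
    calc n < ((sY ∪ sX).sup id) + 1 := Nat.lt_succ_of_le this
      _ ≤ N := le_max_right _ _
  have hrangesub : Finset.range M ⊆ Finset.range N := Finset.range_subset_range.2 hMN
  refine ⟨j, N, hjJ, hMN, ?_, ?_⟩
  · have hsumeq : ∑ n ∈ Finset.range N \ Finset.range M, ucoef hy (w j) n • yb n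
        = (∑ n ∈ Finset.range N, ucoef hy (w j) n • yb n)
          - ∑ n ∈ Finset.range M, ucoef hy (w j) n • yb n := by
      rw [eq_sub_iff_add_eq, Finset.sum_sdiff hrangesub]
    rw [hsumeq]
    have h1 : ‖w j - ∑ n ∈ Finset.range N, ucoef hy (w j) n • yb n‖ ≤ ε/2 :=
      hsY _ (hsub sY Finset.subset_union_left)
    have h2 : ‖∑ n ∈ Finset.range M, ucoef hy (w j) n • yb n‖
        ≤ ∑ n ∈ Finset.range M, ‖ucoef hy (w j) n • yb n‖ := norm_sum_le _ _
    have heq : w j - ((∑ n ∈ Finset.range N, ucoef hy (w j) n • yb n)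
          - ∑ n ∈ Finset.range M, ucoef hy (w j) n • yb n)
        = (w j - ∑ n ∈ Finset.range N, ucoef hy (w j) n • yb n)
          + ∑ n ∈ Finset.range M, ucoef hy (w j) n • yb n := by abel
    rw [heq]
    calc ‖_ + _‖ ≤ _ := norm_add_le _ _
      _ ≤ ε/2 + ε/2 := add_le_add h1 (le_of_lt (lt_of_le_of_lt h2 hjY))
      _ = ε := by ring
  · have hsumeq : ∑ n ∈ Finset.range N \ Finset.range M, ucoef he (T (w j)) n • e n
        = (∑ n ∈ Finset.range N, ucoef he (T (w j)) n • e n)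
          - ∑ n ∈ Finset.range M, ucoef he (T (w j)) n • e n := by
      rw [eq_sub_iff_add_eq, Finset.sum_sdiff hrangesub]
    rw [hsumeq]
    have h1 : ‖T (w j) - ∑ n ∈ Finset.range N, ucoef he (T (w j)) n • e n‖ ≤ ε/2 :=
      hsX _ (hsub sX Finset.subset_union_right)
    have h2 : ‖∑ n ∈ Finset.range M, ucoef he (T (w j)) n • e n‖
        ≤ ∑ n ∈ Finset.range M, ‖ucoef he (T (w j)) n • e n‖ := norm_sum_le _ _
    have heq : T (w j) - ((∑ n ∈ Finset.range N, ucoef he (T (w j)) n • e n)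
          - ∑ n ∈ Finset.range M, ucoef he (T (w j)) n • e n)
        = (T (w j) - ∑ n ∈ Finset.range N, ucoef he (T (w j)) n • e n)
          + ∑ n ∈ Finset.range M, ucoef he (T (w j)) n • e n := by abel
    rw [heq]
    calc ‖_ + _‖ ≤ _ := norm_add_le _ _
      _ ≤ ε/2 + ε/2 := add_le_add h1 (le_of_lt (lt_of_le_of_lt h2 hjX))
      _ = ε := by ring

theorem gliding (he : IsUncondBasis' e) (hy : IsUncondBasis' yb) (T : Y →L[ℝ] X) (w : ℕ → Y)
    (hcY : ∀ n, Tendsto (fun j => ucoef hy (w j) n) atTop (𝓝 0))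
    (hcX : ∀ n, Tendsto (fun j => ucoef he (T (w j)) n) atTop (𝓝 0))
    (η : ℕ → ℝ) (hη : ∀ i, 0 < η i) :
    ∃ (j : ℕ → ℕ) (W : ℕ → Finset ℕ), StrictMono j ∧
      (∀ i i', i < i' → ∀ m ∈ W i, ∀ k ∈ W i', m < k) ∧
      (∀ i, ‖w (j i) - ∑ n ∈ W i, ucoef hy (w (j i)) n • yb n‖ ≤ η i) ∧
      (∀ i, ‖T (w (j i)) - ∑ n ∈ W i, ucoef he (T (w (j i))) n • e n‖ ≤ η i) := by
  classical
  have hstep : ∀ (i : ℕ) (st : ℕ × ℕ), ∃ st' : ℕ × ℕ, st.1 < st'.1 ∧ st.2 ≤ st'.2 ∧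
      ‖w st'.1 - ∑ n ∈ Finset.range st'.2 \ Finset.range st.2, ucoef hy (w st'.1) n • yb n‖
        ≤ η i ∧
      ‖T (w st'.1) - ∑ n ∈ Finset.range st'.2 \ Finset.range st.2,
          ucoef he (T (w st'.1)) n • e n‖ ≤ η i := by
    intro i st
    obtain ⟨j, N, h1, h2, h3, h4⟩ := ghstep he hy T w hcY hcX st.2 st.1 (hη i)
    exact ⟨(j, N), h1, h2, h3, h4⟩
  let E : ℕ → ℕ × ℕ := fun i => Nat.rec (0, 0) (fun i ih => (hstep i ih).choose) i
  have hE : ∀ i, (E i).1 < (E (i+1)).1 ∧ (E i).2 ≤ (E (i+1)).2 ∧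
      ‖w (E (i+1)).1 - ∑ n ∈ Finset.range (E (i+1)).2 \ Finset.range (E i).2,
          ucoef hy (w (E (i+1)).1) n • yb n‖ ≤ η i ∧
      ‖T (w (E (i+1)).1) - ∑ n ∈ Finset.range (E (i+1)).2 \ Finset.range (E i).2,
          ucoef he (T (w (E (i+1)).1)) n • e n‖ ≤ η i :=
    fun i => (hstep i (E i)).choose_spec
  have hmono2 : Monotone fun i => (E i).2 := monotone_nat_of_le_succ fun i => (hE i).2.1
  refine ⟨fun i => (E (i+1)).1,
    fun i => Finset.range (E (i+1)).2 \ Finset.range (E i).2,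
    strictMono_nat_of_lt_succ fun i => (hE (i+1)).1, ?_, fun i => (hE i).2.2.1,
    fun i => (hE i).2.2.2⟩
  intro i i' hii' m hm k hk
  rw [Finset.mem_sdiff, Finset.mem_range] at hm hk
  have h1 : m < (E (i+1)).2 := hm.1
  have h2 : (E i').2 ≤ k := by
    by_contra h
    push_neg at h
    exact hk.2 (Finset.mem_range.2 h)
  have h3 : (E (i+1)).2 ≤ (E i').2 := hmono2 hii'
  omega

end D

section E
variable {V : Type*} [NormedAddCommGroup V] [NormedSpace ℝ V]

theorem rpow_q_inv {q x : ℝ} (hq : 1 ≤ q) (hx : 0 ≤ x) : (x ^ q) ^ (1/q) = x := by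
  have hq0 : q ≠ 0 := by positivity
  rw [← Real.rpow_mul hx, mul_one_div_cancel hq0, Real.rpow_one]

theorem abs_le_sumq {q : ℝ} (hq : 1 ≤ q) (a : ℕ → ℝ) (s : Finset ℕ) {i : ℕ} (hi : i ∈ s) :
    |a i| ≤ (∑ k ∈ s, |a k| ^ q) ^ (1/q) := by
  have h1 : |a i| ^ q ≤ ∑ k ∈ s, |a k| ^ q :=
    Finset.single_le_sum (fun k _ => Real.rpow_nonneg (abs_nonneg _) q) hi
  calc |a i| = (|a i| ^ q) ^ (1/q) := (rpow_q_inv hq (abs_nonneg _)).symm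
    _ ≤ (∑ k ∈ s, |a k| ^ q) ^ (1/q) :=
        Real.rpow_le_rpow (Real.rpow_nonneg (abs_nonneg _) q) h1 (by positivity)

theorem sumq_nonneg {q : ℝ} (a : ℕ → ℝ) (s : Finset ℕ) :
    0 ≤ (∑ k ∈ s, |a k| ^ q) ^ (1/q) :=
  Real.rpow_nonneg (Finset.sum_nonneg fun k _ => Real.rpow_nonneg (abs_nonneg _) q) _

theorem sumq_eq_zero {q : ℝ} (hq : 1 ≤ q) {a : ℕ → ℝ} {s : Finset ℕ}
    (h : (∑ k ∈ s, |a k| ^ q) ^ (1/q) ≤ 0) : ∀ i ∈ s, a i = 0 := by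
  have hq0 : q ≠ 0 := by positivity
  have h1q : 1/q ≠ 0 := by positivity
  have hnn : 0 ≤ ∑ k ∈ s, |a k| ^ q :=
    Finset.sum_nonneg fun k _ => Real.rpow_nonneg (abs_nonneg _) q
  have h0 : (∑ k ∈ s, |a k| ^ q) ^ (1/q) = 0 := le_antisymm h (sumq_nonneg a s)
  have h2 : ∑ k ∈ s, |a k| ^ q = 0 :=
    ((Real.rpow_eq_zero_iff_of_nonneg hnn).1 h0).1
  intro i hi
  have h3 := (Finset.sum_eq_zero_iff_of_nonneg
    (fun k _ => Real.rpow_nonneg (abs_nonneg _) q)).1 h2 i hi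
  have := ((Real.rpow_eq_zero_iff_of_nonneg (abs_nonneg _)).1 h3).1
  exact abs_eq_zero.1 this

theorem perturb_bound {q : ℝ} (hq : 1 ≤ q) (a : ℕ → ℝ) (s : Finset ℕ) (η : ℕ → ℝ)
    (d : ℕ → V) (hd : ∀ i ∈ s, ‖d i‖ ≤ η i) :
    ‖∑ i ∈ s, a i • d i‖ ≤ (∑ i ∈ s, η i) * (∑ i ∈ s, |a i| ^ q) ^ (1/q) := by
  calc ‖∑ i ∈ s, a i • d i‖ ≤ ∑ i ∈ s, ‖a i • d i‖ := norm_sum_le _ _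
    _ ≤ ∑ i ∈ s, η i * (∑ k ∈ s, |a k| ^ q) ^ (1/q) := by
        refine Finset.sum_le_sum fun i hi => ?_
        rw [norm_smul, Real.norm_eq_abs]
        calc |a i| * ‖d i‖ ≤ (∑ k ∈ s, |a k| ^ q) ^ (1/q) * η i :=
              mul_le_mul (abs_le_sumq hq a s hi) (hd i hi) (norm_nonneg _) (sumq_nonneg a s)
          _ = η i * (∑ k ∈ s, |a k| ^ q) ^ (1/q) := mul_comm _ _
    _ = (∑ i ∈ s, η i) * (∑ i ∈ s, |a i| ^ q) ^ (1/q) := by rw [Finset.sum_mul]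

theorem sumq_smul_le {q : ℝ} (hq : 1 ≤ q) (a : ℕ → ℝ) (s : Finset ℕ) (u : ℕ → V) {c : ℝ}
    (hc : 0 ≤ c) (hu : ∀ i ∈ s, ‖u i‖ ≤ c) :
    (∑ i ∈ s, ‖a i • u i‖ ^ q) ^ (1/q) ≤ c * (∑ i ∈ s, |a i| ^ q) ^ (1/q) := by
  have hq0 : (0:ℝ) ≤ q := by linarith
  have h1 : ∑ i ∈ s, ‖a i • u i‖ ^ q ≤ ∑ i ∈ s, |a i| ^ q * c ^ q := by
    refine Finset.sum_le_sum fun i hi => ?_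
    rw [norm_smul, Real.norm_eq_abs, Real.mul_rpow (abs_nonneg _) (norm_nonneg _)]
    exact mul_le_mul_of_nonneg_left
      (Real.rpow_le_rpow (norm_nonneg _) (hu i hi) hq0) (Real.rpow_nonneg (abs_nonneg _) q)
  calc (∑ i ∈ s, ‖a i • u i‖ ^ q) ^ (1/q)
      ≤ (∑ i ∈ s, |a i| ^ q * c ^ q) ^ (1/q) :=
        Real.rpow_le_rpow (Finset.sum_nonneg fun i _ => Real.rpow_nonneg (norm_nonneg _) q) h1
          (by positivity)
    _ = c * (∑ i ∈ s, |a i| ^ q) ^ (1/q) := by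
        rw [← Finset.sum_mul, Real.mul_rpow
          (Finset.sum_nonneg fun k _ => Real.rpow_nonneg (abs_nonneg _) q)
          (Real.rpow_nonneg hc q), rpow_q_inv hq hc, mul_comm]

theorem sumq_smul_ge {q : ℝ} (hq : 1 ≤ q) (a : ℕ → ℝ) (s : Finset ℕ) (x : ℕ → V) {c : ℝ}
    (hc : 0 ≤ c) (hx : ∀ i ∈ s, c ≤ ‖x i‖) :
    c * (∑ i ∈ s, |a i| ^ q) ^ (1/q) ≤ (∑ i ∈ s, ‖a i • x i‖ ^ q) ^ (1/q) := by
  have hq0 : (0:ℝ) ≤ q := by linarith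
  have h1 : ∑ i ∈ s, |a i| ^ q * c ^ q ≤ ∑ i ∈ s, ‖a i • x i‖ ^ q := by
    refine Finset.sum_le_sum fun i hi => ?_
    rw [norm_smul, Real.norm_eq_abs, Real.mul_rpow (abs_nonneg _) (norm_nonneg _)]
    exact mul_le_mul_of_nonneg_left
      (Real.rpow_le_rpow hc (hx i hi) hq0) (Real.rpow_nonneg (abs_nonneg _) q)
  calc c * (∑ i ∈ s, |a i| ^ q) ^ (1/q)
      = (∑ i ∈ s, |a i| ^ q * c ^ q) ^ (1/q) := by
        rw [← Finset.sum_mul, Real.mul_rpow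
          (Finset.sum_nonneg fun k _ => Real.rpow_nonneg (abs_nonneg _) q)
          (Real.rpow_nonneg hc q), rpow_q_inv hq hc, mul_comm]
    _ ≤ (∑ i ∈ s, ‖a i • x i‖ ^ q) ^ (1/q) :=
        Real.rpow_le_rpow
          (Finset.sum_nonneg fun i _ =>
            mul_nonneg (Real.rpow_nonneg (abs_nonneg _) q) (Real.rpow_nonneg hc q)) h1
          (by positivity)

theorem est_finset {e : ℕ → V} {q C : ℝ} {P : Prop}
    (s : Finset ℕ) (B : ℕ → Finset ℕ) (hB : Pairwise (Function.onFun Disjoint B))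
    (g : ℕ → V) (hg : ∀ i, g i ∈ Submodule.span ℝ (e '' (B i : Set ℕ))) :
    ∃ (m : ℕ) (f : Fin m → V) (A : Fin m → Finset ℕ),
      Pairwise (Function.onFun Disjoint A) ∧
      (∀ i, f i ∈ Submodule.span ℝ (e '' (A i : Set ℕ))) ∧
      (∑ i, f i) = ∑ i ∈ s, g i ∧
      (∑ i, ‖f i‖ ^ q) = ∑ i ∈ s, ‖g i‖ ^ q := by
  classical
  set ρ : Fin s.card ≃ {x // x ∈ s} := s.equivFin.symm with hρ
  refine ⟨s.card, fun k => g (ρ k : ℕ), fun k => B (ρ k : ℕ), ?_, fun k => hg _, ?_, ?_⟩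
  · intro i k hik
    exact hB (fun hval => hik (ρ.injective (Subtype.ext hval)))
  · rw [← Finset.sum_coe_sort s g]
    exact Equiv.sum_comp ρ (fun i : {x // x ∈ s} => g (i : ℕ))
  · rw [← Finset.sum_coe_sort s (fun i => ‖g i‖ ^ q)]
    exact Equiv.sum_comp ρ (fun i : {x // x ∈ s} => ‖g (i : ℕ)‖ ^ q)

end E

def LowerEstimate' {X : Type*} [NormedAddCommGroup X] [NormedSpace ℝ X]
    (e : ℕ → X) (q : ℝ) : Prop :=
  ∃ C : ℝ, 0 < C ∧ ∀ (m : ℕ) (f : Fin m → X) (A : Fin m → Finset ℕ),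
    Pairwise (Function.onFun Disjoint A) →
    (∀ i, f i ∈ Submodule.span ℝ (e '' (A i : Set ℕ))) →
    (∑ i, ‖f i‖ ^ q) ^ (1 / q) ≤ C * ‖∑ i, f i‖

def UpperEstimate' {X : Type*} [NormedAddCommGroup X] [NormedSpace ℝ X]
    (e : ℕ → X) (q : ℝ) : Prop :=
  ∃ C : ℝ, 0 < C ∧ ∀ (m : ℕ) (f : Fin m → X) (A : Fin m → Finset ℕ),
    Pairwise (Function.onFun Disjoint A) →
    (∀ i, f i ∈ Submodule.span ℝ (e '' (A i : Set ℕ))) →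
    ‖∑ i, f i‖ ≤ C * (∑ i, ‖f i‖ ^ q) ^ (1 / q)

def CompactOp' {X Y : Type*} [NormedAddCommGroup X] [NormedSpace ℝ X]
    [NormedAddCommGroup Y] [NormedSpace ℝ Y] (T : Y →L[ℝ] X) : Prop :=
  IsCompact (closure (T '' Metric.closedBall 0 1))

def StrictlySingular' {X Y : Type*} [NormedAddCommGroup X] [NormedSpace ℝ X]
    [NormedAddCommGroup Y] [NormedSpace ℝ Y] (T : Y →L[ℝ] X) : Prop :=
  ∀ (Z : Submodule ℝ Y) (c : ℝ), 0 < c → (∀ z ∈ Z, c * ‖z‖ ≤ ‖T z‖) →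
    FiniteDimensional ℝ Z

set_option maxHeartbeats 1000000 in
theorem statement6' {X Y : Type*} [NormedAddCommGroup X] [NormedSpace ℝ X] [CompleteSpace X]
    [NormedAddCommGroup Y] [NormedSpace ℝ Y] [CompleteSpace Y]
    (q : ℝ) (hq : 1 ≤ q)
    (e : ℕ → X) (he : IsUncondBasis' e) (hlow : LowerEstimate' e q)
    (y : ℕ → Y) (hy : IsUncondBasis' y) (hup : UpperEstimate' y q)
    (T : Y →L[ℝ] X) (hss : StrictlySingular' T) :
    CompactOp' T := by
  classical
  by_contra hnc
  have hTB : ¬ TotallyBounded (T '' Metric.closedBall 0 1) := fun h =>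
    hnc (h.closure.isCompact_of_isClosed isClosed_closure)
  obtain ⟨δ, hδ, p, hpmem, hpsep⟩ := exists_separated hTB
  have hpre : ∀ k, ∃ vv : Y, ‖vv‖ ≤ 1 ∧ T vv = p k := by
    intro k
    obtain ⟨vv, hvv, hTvv⟩ := hpmem k
    refine ⟨vv, ?_, hTvv⟩
    simpa [Metric.mem_closedBall, dist_zero_right] using hvv
  choose v hv1 hv2 using hpre
  obtain ⟨KY, hKY1, hKYb⟩ := uncond_bound hy
  obtain ⟨KX, hKX1, hKXb⟩ := uncond_bound he
  have hcoordY : ∀ (x : Y) (n : ℕ), |ucoef hy x n| * ‖y n‖ ≤ KY * ‖x‖ := by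
    intro x n
    have h := hKYb x {n}
    rwa [Finset.sum_singleton, norm_smul, Real.norm_eq_abs] at h
  have hcoordX : ∀ (x : X) (n : ℕ), |ucoef he x n| * ‖e n‖ ≤ KX * ‖x‖ := by
    intro x n
    have h := hKXb x {n}
    rwa [Finset.sum_singleton, norm_smul, Real.norm_eq_abs] at h
  -- diagonal subsequence
  set g : ℕ → (ℕ → ℝ) × (ℕ → ℝ) :=
    fun k => (fun n => ucoef hy (v k) n, fun n => ucoef he (T (v k)) n) with hg
  have hb : ∀ k n, |(g k).1 n| ≤ KY / ‖y n‖ ∧ |(g k).2 n| ≤ (KX * ‖T‖) / ‖e n‖ := by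
    intro k n
    have hyn : (0:ℝ) < ‖y n‖ := norm_pos_iff.2 (hy.1 n)
    have hen : (0:ℝ) < ‖e n‖ := norm_pos_iff.2 (he.1 n)
    constructor
    · rw [le_div_iff₀ hyn]
      calc |ucoef hy (v k) n| * ‖y n‖ ≤ KY * ‖v k‖ := hcoordY _ n
        _ ≤ KY := by nlinarith [hv1 k, norm_nonneg (v k)]
    · rw [le_div_iff₀ hen]
      calc |ucoef he (T (v k)) n| * ‖e n‖ ≤ KX * ‖T (v k)‖ := hcoordX _ n
        _ ≤ KX * ‖T‖ := by
            have h1 := (T : Y →L[ℝ] X).le_opNorm (v k)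
            have h2 : ‖T‖ * ‖v k‖ ≤ ‖T‖ * 1 :=
              mul_le_mul_of_nonneg_left (hv1 k) (norm_nonneg _)
            nlinarith [norm_nonneg (T (v k))]
  obtain ⟨φ, L, hφ, hC1, hC2⟩ := exists_pointwise_subseq g _ _ hb
  -- difference sequence
  set w : ℕ → Y := fun i => v (φ (2*i)) - v (φ (2*i+1)) with hwdef
  have hwle : ∀ i, ‖w i‖ ≤ 2 := by
    intro i
    calc ‖w i‖ ≤ ‖v (φ (2*i))‖ + ‖v (φ (2*i+1))‖ := norm_sub_le _ _
      _ ≤ 2 := by linarith [hv1 (φ (2*i)), hv1 (φ (2*i+1))]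
  have hTwge : ∀ i, δ ≤ ‖T (w i)‖ := by
    intro i
    have h2 : φ (2*i) < φ (2*i+1) := hφ (by omega)
    calc δ ≤ dist (p (φ (2*i))) (p (φ (2*i+1))) := hpsep _ _ h2
      _ = ‖T (w i)‖ := by rw [dist_eq_norm, ← hv2, ← hv2, ← map_sub]
  have h2i : Tendsto (fun i : ℕ => 2*i) atTop atTop :=
    tendsto_atTop_mono (fun i => by simp only [id_eq]; omega) tendsto_id
  have h2i1 : Tendsto (fun i : ℕ => 2*i+1) atTop atTop :=
    tendsto_atTop_mono (fun i => by simp only [id_eq]; omega) tendsto_id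
  have hcY' : ∀ n, Tendsto (fun i => ucoef hy (w i) n) atTop (𝓝 0) := by
    intro n
    have ha := ((hC1 n).comp h2i).sub ((hC1 n).comp h2i1)
    rw [sub_self] at ha
    refine Tendsto.congr (fun i => ?_) ha
    show ucoef hy (v (φ (2*i))) n - ucoef hy (v (φ (2*i+1))) n = ucoef hy (w i) n
    rw [hwdef]
    exact (congrFun (ucoef_sub hy _ _) n).symm
  have hcX' : ∀ n, Tendsto (fun i => ucoef he (T (w i)) n) atTop (𝓝 0) := by
    intro n
    have ha := ((hC2 n).comp h2i).sub ((hC2 n).comp h2i1)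
    rw [sub_self] at ha
    refine Tendsto.congr (fun i => ?_) ha
    show ucoef he (T (v (φ (2*i)))) n - ucoef he (T (v (φ (2*i+1)))) n = ucoef he (T (w i)) n
    rw [hwdef]
    have : T (v (φ (2*i)) - v (φ (2*i+1))) = T (v (φ (2*i))) - T (v (φ (2*i+1))) := map_sub _ _ _
    rw [this]
    exact (congrFun (ucoef_sub he _ _) n).symm
  -- constants
  obtain ⟨CX, hCX0, hlowC⟩ := hlow
  obtain ⟨CY, hCY0, hupC⟩ := hup
  set ε₀ : ℝ := min 1 (min (δ/2) (δ/(4*CX))) with hε₀def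
  have hε₀pos : 0 < ε₀ := lt_min one_pos (lt_min (by linarith) (by positivity))
  have hε₀le1 : ε₀ ≤ 1 := min_le_left _ _
  have hε₀leδ2 : ε₀ ≤ δ/2 := le_trans (min_le_right _ _) (min_le_left _ _)
  have hε₀leδ4 : ε₀ ≤ δ/(4*CX) := le_trans (min_le_right _ _) (min_le_right _ _)
  set η : ℕ → ℝ := fun i => ε₀ * (1/2)^(i+1) with hηdef
  have hηpos : ∀ i, 0 < η i := fun i => by positivity
  have hηle : ∀ i, η i ≤ ε₀ := by
    intro i
    have h1 : ((1:ℝ)/2)^(i+1) ≤ 1 := pow_le_one₀ (by norm_num) (by norm_num)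
    calc η i = ε₀ * (1/2)^(i+1) := rfl
      _ ≤ ε₀ * 1 := mul_le_mul_of_nonneg_left h1 (le_of_lt hε₀pos)
      _ = ε₀ := mul_one _
  have hgeom : ∀ m : ℕ, ∑ i ∈ Finset.range m, ((1:ℝ)/2)^(i+1) = 1 - (1/2)^m := by
    intro m
    induction m with
    | zero => simp
    | succ m ih => rw [Finset.sum_range_succ, ih]; ring
  have hηsum : ∀ s : Finset ℕ, ∑ i ∈ s, η i ≤ ε₀ := by
    intro s
    have hsub : s ⊆ Finset.range (s.sup id + 1) := fun n hn =>
      Finset.mem_range.2 (Nat.lt_succ_of_le (Finset.le_sup (f := id) hn))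
    have h1 : ∑ i ∈ s, ((1:ℝ)/2)^(i+1) ≤ ∑ i ∈ Finset.range (s.sup id + 1), ((1:ℝ)/2)^(i+1) :=
      Finset.sum_le_sum_of_subset_of_nonneg hsub (fun i _ _ => by positivity)
    have h2 : ∑ i ∈ Finset.range (s.sup id + 1), ((1:ℝ)/2)^(i+1) ≤ 1 := by
      rw [hgeom]
      have : (0:ℝ) ≤ (1/2)^(s.sup id + 1) := by positivity
      linarith
    calc ∑ i ∈ s, η i = ε₀ * ∑ i ∈ s, ((1:ℝ)/2)^(i+1) := by rw [Finset.mul_sum]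
      _ ≤ ε₀ * 1 := mul_le_mul_of_nonneg_left (le_trans h1 h2) (le_of_lt hε₀pos)
      _ = ε₀ := mul_one _
  -- gliding hump
  obtain ⟨j, W, hjmono, hWord, hYap, hXap⟩ := gliding he hy T w hcY' hcX' η hηpos
  set u : ℕ → Y := fun i => ∑ n ∈ W i, ucoef hy (w (j i)) n • y n with hudef
  set xv : ℕ → X := fun i => ∑ n ∈ W i, ucoef he (T (w (j i))) n • e n with hxvdef
  have hWdisj : Pairwise (Function.onFun Disjoint W) := by
    intro i i' hii'
    rcases hii'.lt_or_gt with h | h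
    · rw [Function.onFun, Finset.disjoint_left]
      intro m hm hm'
      exact absurd (hWord i i' h m hm m hm') (lt_irrefl m)
    · rw [Function.onFun, Finset.disjoint_right]
      intro m hm hm'
      exact absurd (hWord i' i h m hm m hm') (lt_irrefl m)
  have hu_mem : ∀ i, u i ∈ Submodule.span ℝ (y '' (W i : Set ℕ)) := fun i =>
    Submodule.sum_mem _ fun n hn =>
      Submodule.smul_mem _ _ (Submodule.subset_span ⟨n, Finset.mem_coe.2 hn, rfl⟩)
  have hxv_mem : ∀ i, xv i ∈ Submodule.span ℝ (e '' (W i : Set ℕ)) := fun i =>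
    Submodule.sum_mem _ fun n hn =>
      Submodule.smul_mem _ _ (Submodule.subset_span ⟨n, Finset.mem_coe.2 hn, rfl⟩)
  have hule : ∀ i, ‖u i‖ ≤ 3 := by
    intro i
    have h1 := hYap i
    have h2 : ‖u i‖ - ‖w (j i)‖ ≤ ‖w (j i) - u i‖ := by
      have h2' := norm_sub_norm_le (u i) (w (j i))
      rwa [norm_sub_rev (u i) (w (j i))] at h2'
    have := hwle (j i)
    have := hηle i
    linarith
  have hxge : ∀ i, δ/2 ≤ ‖xv i‖ := by
    intro i
    have h1 := hXap i
    have h2 : ‖T (w (j i))‖ - ‖xv i‖ ≤ ‖T (w (j i)) - xv i‖ := norm_sub_norm_le _ _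
    have h3 := hTwge (j i)
    have h4 := hηle i
    linarith
  -- key estimates
  have key1 : ∀ (a : ℕ → ℝ) (s : Finset ℕ),
      ‖∑ i ∈ s, a i • w (j i)‖ ≤ (3*CY + 1) * (∑ i ∈ s, |a i| ^ q) ^ (1/q) := by
    intro a s
    have hsplit : ∑ i ∈ s, a i • w (j i)
        = (∑ i ∈ s, a i • u i) + ∑ i ∈ s, a i • (w (j i) - u i) := by
      rw [← Finset.sum_add_distrib]
      exact Finset.sum_congr rfl fun i _ => by rw [← smul_add]; congr 1; abel
    obtain ⟨m, f, A, hdA, hmemA, hsumA, hsumqA⟩ :=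
      est_finset (e := y) (q := q) (C := CY) (P := True) s W hWdisj (fun i => a i • u i)
        (fun i => Submodule.smul_mem _ _ (hu_mem i))
    have hup1 := hupC m f A hdA hmemA
    rw [hsumA, hsumqA] at hup1
    have hup2 : (∑ i ∈ s, ‖a i • u i‖ ^ q) ^ (1/q) ≤ 3 * (∑ i ∈ s, |a i| ^ q) ^ (1/q) :=
      sumq_smul_le hq a s u (by norm_num) (fun i _ => hule i)
    have hA : ‖∑ i ∈ s, a i • u i‖ ≤ CY * (3 * (∑ i ∈ s, |a i| ^ q) ^ (1/q)) :=
      le_trans hup1 (mul_le_mul_of_nonneg_left hup2 (le_of_lt hCY0))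
    have hB : ‖∑ i ∈ s, a i • (w (j i) - u i)‖ ≤ ε₀ * (∑ i ∈ s, |a i| ^ q) ^ (1/q) := by
      have := perturb_bound hq a s η (fun i => w (j i) - u i) (fun i _ => hYap i)
      exact le_trans this (mul_le_mul_of_nonneg_right (hηsum s) (sumq_nonneg a s))
    calc ‖∑ i ∈ s, a i • w (j i)‖
        ≤ ‖∑ i ∈ s, a i • u i‖ + ‖∑ i ∈ s, a i • (w (j i) - u i)‖ := by
          rw [hsplit]; exact norm_add_le _ _
      _ ≤ CY * (3 * (∑ i ∈ s, |a i| ^ q) ^ (1/q)) + ε₀ * (∑ i ∈ s, |a i| ^ q) ^ (1/q) :=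
          add_le_add hA hB
      _ ≤ (3*CY + 1) * (∑ i ∈ s, |a i| ^ q) ^ (1/q) := by
          have hσ := sumq_nonneg (q := q) a s
          nlinarith [mul_le_mul_of_nonneg_right hε₀le1 hσ]
  have key2 : ∀ (a : ℕ → ℝ) (s : Finset ℕ),
      δ/(4*CX) * (∑ i ∈ s, |a i| ^ q) ^ (1/q) ≤ ‖T (∑ i ∈ s, a i • w (j i))‖ := by
    intro a s
    have hTz : T (∑ i ∈ s, a i • w (j i)) = ∑ i ∈ s, a i • T (w (j i)) := by
      rw [map_sum]
      exact Finset.sum_congr rfl fun i _ => map_smul _ _ _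
    have hsplit : ∑ i ∈ s, a i • T (w (j i))
        = (∑ i ∈ s, a i • xv i) + ∑ i ∈ s, a i • (T (w (j i)) - xv i) := by
      rw [← Finset.sum_add_distrib]
      exact Finset.sum_congr rfl fun i _ => by rw [← smul_add]; congr 1; abel
    obtain ⟨m, f, A, hdA, hmemA, hsumA, hsumqA⟩ :=
      est_finset (e := e) (q := q) (C := CX) (P := True) s W hWdisj (fun i => a i • xv i)
        (fun i => Submodule.smul_mem _ _ (hxv_mem i))
    have hlow1 := hlowC m f A hdA hmemA
    rw [hsumA, hsumqA] at hlow1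
    have hlow2 : (δ/2) * (∑ i ∈ s, |a i| ^ q) ^ (1/q) ≤ (∑ i ∈ s, ‖a i • xv i‖ ^ q) ^ (1/q) :=
      sumq_smul_ge hq a s xv (by linarith) (fun i _ => hxge i)
    have hσ := sumq_nonneg (q := q) a s
    have hmain : δ/(2*CX) * (∑ i ∈ s, |a i| ^ q) ^ (1/q) ≤ ‖∑ i ∈ s, a i • xv i‖ := by
      have h1 : (δ/2) * (∑ i ∈ s, |a i| ^ q) ^ (1/q) ≤ CX * ‖∑ i ∈ s, a i • xv i‖ :=
        le_trans hlow2 hlow1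
      rw [div_mul_eq_mul_div, div_le_iff₀ (show (0:ℝ) < 2*CX by positivity)]
      nlinarith [h1]
    have hB : ‖∑ i ∈ s, a i • (T (w (j i)) - xv i)‖ ≤ δ/(4*CX) * (∑ i ∈ s, |a i| ^ q) ^ (1/q) := by
      have := perturb_bound hq a s η (fun i => T (w (j i)) - xv i) (fun i _ => hXap i)
      refine le_trans this ?_
      exact mul_le_mul_of_nonneg_right (le_trans (hηsum s) hε₀leδ4) hσ
    have htri : ‖∑ i ∈ s, a i • xv i‖ - ‖∑ i ∈ s, a i • (T (w (j i)) - xv i)‖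
        ≤ ‖∑ i ∈ s, a i • T (w (j i))‖ := by
      rw [hsplit]
      have h5 : ‖∑ i ∈ s, a i • xv i‖
          ≤ ‖(∑ i ∈ s, a i • xv i) + ∑ i ∈ s, a i • (T (w (j i)) - xv i)‖
            + ‖∑ i ∈ s, a i • (T (w (j i)) - xv i)‖ := by
        calc ‖∑ i ∈ s, a i • xv i‖
            = ‖((∑ i ∈ s, a i • xv i) + ∑ i ∈ s, a i • (T (w (j i)) - xv i))
              - ∑ i ∈ s, a i • (T (w (j i)) - xv i)‖ := by congr 1; abel
          _ ≤ _ := norm_sub_le _ _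
      linarith
    have hhalf : δ/(2*CX) = 2 * (δ/(4*CX)) := by field_simp; ring
    rw [hTz]
    nlinarith [hmain, hB, htri]
  -- conclude via strict singularity
  set c : ℝ := (δ/(4*CX)) / (3*CY + 1) with hcdef
  have hc : 0 < c := by positivity
  set Z := Submodule.span ℝ (Set.range fun i => w (j i)) with hZdef
  have hZ : ∀ z ∈ Z, c * ‖z‖ ≤ ‖T z‖ := by
    intro z hz
    rw [hZdef, Finsupp.mem_span_range_iff_exists_finsupp] at hz
    obtain ⟨cf, hcf⟩ := hz
    rw [Finsupp.sum] at hcf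
    subst hcf
    have h1 := key1 cf cf.support
    have h2 := key2 cf cf.support
    have hσ := sumq_nonneg (q := q) cf cf.support
    have h3 : c * ‖∑ i ∈ cf.support, cf i • w (j i)‖
        ≤ c * ((3*CY + 1) * (∑ i ∈ cf.support, |cf i| ^ q) ^ (1/q)) :=
      mul_le_mul_of_nonneg_left h1 (le_of_lt hc)
    have h4 : c * ((3*CY + 1) * (∑ i ∈ cf.support, |cf i| ^ q) ^ (1/q))
        = δ/(4*CX) * (∑ i ∈ cf.support, |cf i| ^ q) ^ (1/q) := by
      rw [hcdef]
      field_simp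
    rw [h4] at h3
    exact le_trans h3 h2
  have hfd : FiniteDimensional ℝ Z := hss Z c hc hZ
  -- linear independence of the w (j i) gives a contradiction
  have hli : LinearIndependent ℝ (fun i => (⟨w (j i), Submodule.subset_span
      (Set.mem_range_self i)⟩ : Z)) := by
    rw [linearIndependent_iff']
    intro s a hsum i hi
    have hsum' : ∑ i ∈ s, a i • w (j i) = 0 := by
      have h0 := congrArg Z.subtype hsum
      rw [map_sum, map_zero] at h0
      rw [← h0]
      exact Finset.sum_congr rfl fun i _ => by rw [map_smul]; rfl
    have h2 := key2 a s
    rw [hsum', map_zero, norm_zero] at h2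
    have hpos : 0 < δ/(4*CX) := by positivity
    have hσ0 : (∑ i ∈ s, |a i| ^ q) ^ (1/q) ≤ 0 := by nlinarith [sumq_nonneg (q := q) a s]
    exact sumq_eq_zero hq hσ0 i hi
  haveI : Finite ℕ := hli.finite
  exact not_finite ℕ

end AuxDev

theorem statement6 {X Y : Type*} [NormedAddCommGroup X] [NormedSpace ℝ X] [CompleteSpace X]
    [NormedAddCommGroup Y] [NormedSpace ℝ Y] [CompleteSpace Y]
    (q : ℝ) (hq : 1 ≤ q)
    (e : ℕ → X) (he : IsUncondBasis e) (hlow : LowerEstimate e q)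
    (y : ℕ → Y) (hy : IsUncondBasis y) (hup : UpperEstimate y q)
    (T : Y →L[ℝ] X) (hss : StrictlySingular T) :
    CompactOp T := by
  exact statement6' q hq e he hlow y hy hup T hss
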